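/- Let (X,μ) be a connected weighted graph with bounded row sums, fix x₀, x ∈ X and λ > R_μ, where R_μ := 1/limsup_{n→∞} (μ^{(n)}(x,y))^{1/n} is the convergence parameter (independent of x,y by connectedness). Then H(t) := e^{−t} ∑_{n=0}^∞ μ^{(n)}(x₀,x) (λt)^n / n! tends to +∞ as t → +∞. -/

import Mathlib

open Filter MeasureTheory ProbabilityTheory
open scoped ENNReal NNReal

/-- `n`-step weights (matrix powers) of a weight kernel `μ` on a countable set. -/
noncomputable def matPow {X : Type*} [DecidableEq X] (μ : X → X → ℝ≥0∞) :
    ℕ → X → X → ℝ≥0∞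
  | 0, x, y => if x = y then 1 else 0
  | n + 1, x, y => ∑' z, matPow μ n x z * μ z y

/-- `(X, μ)` has bounded row sums. -/
def bddRows {X : Type*} (μ : X → X → ℝ≥0∞) : Prop :=
  ∃ K : ℝ≥0∞, K ≠ ⊤ ∧ ∀ x, ∑' y, μ x y ≤ K

/-- `(X, μ)` is connected. -/
def connectedW {X : Type*} [DecidableEq X] (μ : X → X → ℝ≥0∞) : Prop :=
  ∀ x y, ∃ n, 0 < n ∧ 0 < matPow μ n x y

/-- `limsup_n (μ^{(n)}(x,y))^{1/n}`, the reciprocal of the convergence parameter. -/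
noncomputable def lsRoot {X : Type*} [DecidableEq X] (μ : X → X → ℝ≥0∞) (x y : X) : ℝ≥0∞ :=
  Filter.limsup (fun n : ℕ => matPow μ n x y ^ (n : ℝ)⁻¹) Filter.atTop

/-- The convergence parameter `R = 1 / limsup_n (μ^{(n)}(x,y))^{1/n}`. -/
noncomputable def convR {X : Type*} [DecidableEq X] (μ : X → X → ℝ≥0∞) (x y : X) : ℝ≥0∞ :=
  (lsRoot μ x y)⁻¹

open Classical in
/-- Restriction of a weight kernel to a subset (extended by `0`). -/
noncomputable def restrictW {X : Type*} (μ : X → X → ℝ≥0∞) (A : Set X) : X → X → ℝ≥0∞ :=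
  fun x y => if x ∈ A ∧ y ∈ A then μ x y else 0
/-- The expected number of particles at site `x` at time `t` of the `λ`-branching random
walk on `(X, μ)` started from one particle at `x₀`:
`H(t) = e^{-t} ∑_{n} μ^{(n)}(x₀, x) (λ t)^n / n!`. -/
noncomputable def expParticles {X : Type*} [DecidableEq X] (μ : X → X → ℝ≥0∞)
    (lam : ℝ) (x₀ x : X) (t : ℝ) : ℝ≥0∞ :=
  ENNReal.ofReal (Real.exp (-t)) *
    ∑' n : ℕ, matPow μ n x₀ x * ENNReal.ofReal (lam * t) ^ n / (Nat.factorial n : ℝ≥0∞)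

/-! ### Auxiliary lemmas -/

section Aux

variable {X : Type*} [DecidableEq X] (μ : X → X → ℝ≥0∞)

lemma matPow_add' (n m : ℕ) (x y : X) :
    matPow μ (n + m) x y = ∑' z, matPow μ n x z * matPow μ m z y := by
  induction m generalizing y with
  | zero =>
    simp only [Nat.add_zero, matPow]
    rw [tsum_eq_single y]
    · simp
    · intro z hz; simp [hz]
  | succ m ih =>
    show matPow μ ((n + m) + 1) x y = _
    rw [matPow]
    calc ∑' w, matPow μ (n + m) x w * μ w y
        = ∑' w, (∑' z, matPow μ n x z * matPow μ m z w) * μ w y := by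
          simp_rw [ih]
      _ = ∑' w, ∑' z, matPow μ n x z * matPow μ m z w * μ w y := by
          simp_rw [ENNReal.tsum_mul_right]
      _ = ∑' z, ∑' w, matPow μ n x z * (matPow μ m z w * μ w y) := by
          rw [ENNReal.tsum_comm]; simp_rw [mul_assoc]
      _ = ∑' z, matPow μ n x z * ∑' w, matPow μ m z w * μ w y := by
          simp_rw [ENNReal.tsum_mul_left]
      _ = ∑' z, matPow μ n x z * matPow μ (m + 1) z y := rfl

lemma le_matPow_add' (n m : ℕ) (x y z : X) :
    matPow μ n x z * matPow μ m z y ≤ matPow μ (n + m) x y := by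
  rw [matPow_add']; exact ENNReal.le_tsum z

lemma matPow_rowsum_le' {K : ℝ≥0∞} (hK : ∀ x, ∑' y, μ x y ≤ K) (n : ℕ) (x : X) :
    ∑' y, matPow μ n x y ≤ K ^ n := by
  induction n with
  | zero =>
    simp only [matPow, pow_zero]
    rw [tsum_eq_single x] <;> simp +contextual [eq_comm]
  | succ n ih =>
    calc ∑' y, matPow μ (n+1) x y = ∑' y, ∑' z, matPow μ n x z * μ z y := rfl
      _ = ∑' z, matPow μ n x z * ∑' y, μ z y := by
          rw [ENNReal.tsum_comm]; simp_rw [ENNReal.tsum_mul_left]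
      _ ≤ ∑' z, matPow μ n x z * K := by
          gcongr with z; exact hK z
      _ = (∑' z, matPow μ n x z) * K := ENNReal.tsum_mul_right
      _ ≤ K ^ n * K := by gcongr
      _ = K ^ (n+1) := (pow_succ K n).symm

lemma matPow_le_pow' {K : ℝ≥0∞} (hK : ∀ x, ∑' y, μ x y ≤ K) (n : ℕ) (x y : X) :
    matPow μ n x y ≤ K ^ n :=
  le_trans (ENNReal.le_tsum y) (matPow_rowsum_le' μ hK n x)

end Aux

lemma tsum_split' (f : ℕ → ℝ≥0∞) (k : ℕ) :
    ∑' n, f n = ∑ i ∈ Finset.range k, f i + ∑' m, f (m + k) := by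
  induction k with
  | zero => simp
  | succ k ih =>
    have h : ∑' m, f (m + k) = f (0 + k) + ∑' m, f ((m + 1) + k) :=
      tsum_eq_zero_add' ENNReal.summable
    rw [ih, h, Finset.sum_range_succ]
    have h2 : ∀ m, f ((m + 1) + k) = f (m + (k + 1)) := fun m => by congr 1; omega
    simp_rw [h2, Nat.zero_add]
    ring

lemma exp_tsum_ennreal' {s : ℝ} (hs : 0 ≤ s) :
    ∑' n : ℕ, ENNReal.ofReal s ^ n / (n.factorial : ℝ≥0∞) = ENNReal.ofReal (Real.exp s) := by
  have h1 : ∀ n : ℕ, ENNReal.ofReal s ^ n / (n.factorial : ℝ≥0∞)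
      = ENNReal.ofReal (s ^ n / n.factorial) := by
    intro n
    rw [ENNReal.ofReal_div_of_pos (by positivity), ← ENNReal.ofReal_pow hs,
      ENNReal.ofReal_natCast]
  simp_rw [h1]
  rw [← ENNReal.ofReal_tsum_of_nonneg (fun n => by positivity)
    (Real.summable_pow_div_factorial s)]
  congr 1
  rw [Real.exp_eq_exp_ℝ, NormedSpace.exp_eq_tsum_div]

lemma ap_compare' (y : ℝ≥0∞) (hy : 1 ≤ y) (n₀ d : ℕ) (hd : 0 < d) :
    ∑' m : ℕ, y ^ (m + n₀) / ((m + n₀).factorial : ℝ≥0∞) ≤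
      (d : ℝ≥0∞) * y ^ d * ∑' j : ℕ, y ^ (n₀ + j * d) / ((n₀ + j * d).factorial : ℝ≥0∞) := by
  haveI : NeZero d := ⟨hd.ne'⟩
  set g : ℕ → ℝ≥0∞ := fun m => y ^ (m + n₀) / ((m + n₀).factorial : ℝ≥0∞) with hg
  have hequiv : ∑' m : ℕ, g m = ∑' p : ℕ × Fin d, g (p.1 * d + (p.2 : ℕ)) :=
    (((Nat.divModEquiv d).symm).tsum_eq g).symm
  calc ∑' m : ℕ, g m = ∑' (j : ℕ) (i : Fin d), g (j * d + (i : ℕ)) := by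
        rw [hequiv, ENNReal.tsum_prod']
    _ ≤ ∑' (j : ℕ) (_ : Fin d), y ^ d * (y ^ (n₀ + j * d) / ((n₀ + j * d).factorial : ℝ≥0∞)) := by
        gcongr with j i
        rw [hg]
        have h1 : y ^ (j * d + (i : ℕ) + n₀) ≤ y ^ d * y ^ (n₀ + j * d) := by
          rw [← pow_add]
          exact pow_le_pow_right' hy (by omega)
        have h2 : ((n₀ + j * d).factorial : ℝ≥0∞) ≤ ((j * d + (i : ℕ) + n₀).factorial : ℝ≥0∞) :=
          Nat.cast_le.mpr (Nat.factorial_le (by omega))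
        calc y ^ (j * d + (i : ℕ) + n₀) / ((j * d + (i : ℕ) + n₀).factorial : ℝ≥0∞)
            ≤ (y ^ d * y ^ (n₀ + j * d)) / ((n₀ + j * d).factorial : ℝ≥0∞) :=
              ENNReal.div_le_div h1 h2
          _ = y ^ d * (y ^ (n₀ + j * d) / ((n₀ + j * d).factorial : ℝ≥0∞)) := by
              rw [mul_div_assoc]
    _ = ∑' (j : ℕ), (d : ℝ≥0∞) * (y ^ d * (y ^ (n₀ + j * d) / ((n₀ + j * d).factorial : ℝ≥0∞))) := by
        congr 1; ext j
        rw [tsum_fintype]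
        simp [Finset.sum_const, Finset.card_univ, nsmul_eq_mul]
    _ = (d : ℝ≥0∞) * y ^ d * ∑' j : ℕ, y ^ (n₀ + j * d) / ((n₀ + j * d).factorial : ℝ≥0∞) := by
        simp_rw [← mul_assoc, ← ENNReal.tsum_mul_left]

lemma poly_exp_zero' (α : ℝ) (N₀ : ℕ) :
    Tendsto (fun t : ℝ => Real.exp (-t) * ∑ i ∈ Finset.range N₀, (α*t)^i / i.factorial)
      atTop (nhds 0) := by
  have : ∀ t : ℝ, Real.exp (-t) * ∑ i ∈ Finset.range N₀, (α*t)^i / i.factorial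
      = ∑ i ∈ Finset.range N₀, (α^i / i.factorial) * (t^i * Real.exp (-t)) := by
    intro t
    rw [Finset.mul_sum]
    congr 1; ext i
    rw [mul_pow]; ring
  simp_rw [this]
  have h0 : (0:ℝ) = ∑ i ∈ Finset.range N₀, (0:ℝ) := by simp
  rw [h0]
  apply tendsto_finset_sum
  intro i _
  have := Real.tendsto_pow_mul_exp_neg_atTop_nhds_zero i
  simpa using this.const_mul (α^i / i.factorial)

lemma hlimit' (α : ℝ) (hα : 1 < α) (d N₀ : ℕ) (hd : 0 < d) :
    Tendsto (fun t : ℝ =>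
      (Real.exp ((α-1)*t) - Real.exp (-t) * ∑ i ∈ Finset.range N₀, (α*t)^i / i.factorial)
        / (d * α^d * t^d)) atTop atTop := by
  have key : ∀ t : ℝ, (Real.exp ((α-1)*t) - Real.exp (-t) * ∑ i ∈ Finset.range N₀, (α*t)^i / i.factorial)
        / (d * α^d * t^d)
      = Real.exp ((α-1)*t) / (d * α^d * t^d)
        + -(Real.exp (-t) * (∑ i ∈ Finset.range N₀, (α*t)^i / i.factorial) / (d * α^d * t^d)) := by
    intro t; rw [sub_div]; ring
  simp_rw [key]
  apply Filter.Tendsto.atTop_add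
  · have hα1 : (0:ℝ) < α - 1 := by linarith
    have hcomp : Tendsto (fun t : ℝ => (α-1)*t) atTop atTop :=
      tendsto_id.const_mul_atTop hα1
    have hF : Tendsto (fun t : ℝ => Real.exp ((α-1)*t) / ((α-1)*t)^d) atTop atTop :=
      (Real.tendsto_exp_div_pow_atTop d).comp hcomp
    have heq : ∀ t : ℝ, ((α-1)^d / (d * α^d)) * (Real.exp ((α-1)*t) / ((α-1)*t)^d)
        = Real.exp ((α-1)*t) / (d * α^d * t^d) := by
      intro t
      calc ((α-1)^d / (d * α^d)) * (Real.exp ((α-1)*t) / ((α-1)*t)^d)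
          = ((α-1)^d * Real.exp ((α-1)*t)) / ((α-1)^d * ((d:ℝ) * α^d * t^d)) := by
            rw [mul_pow, div_mul_div_comm]; ring_nf
        _ = Real.exp ((α-1)*t) / ((d:ℝ) * α^d * t^d) :=
            mul_div_mul_left _ _ (pow_ne_zero d (by linarith))
    have hc : (0:ℝ) < (α-1)^d / (d * α^d) := by positivity
    have := hF.const_mul_atTop hc
    simpa only [heq] using this
  · have h2 : Tendsto (fun t : ℝ => Real.exp (-t) * ∑ i ∈ Finset.range N₀, (α*t)^i / i.factorial) atTop (nhds 0) :=
      poly_exp_zero' α N₀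
    have h3 : Tendsto (fun t : ℝ => (d * α^d * t^d)⁻¹) atTop (nhds 0) := by
      apply Tendsto.comp tendsto_inv_atTop_zero
      apply Tendsto.const_mul_atTop (by positivity : (0:ℝ) < d * α^d)
      exact tendsto_pow_atTop hd.ne'
    have := (h2.mul h3).neg
    simp only [mul_zero, neg_zero] at this
    convert this using 2 with t
    rw [div_eq_mul_inv]


/-- Lemma 5.2, supercritical part: on a connected weighted graph with
bounded row sums, if `λ > R_μ` then the expected number of particles at `x` tends to `+∞`. -/
theorem expParticles_tendsto_top_of_supercritical
    {X : Type*} [Countable X] [DecidableEq X]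
    (μ : X → X → ℝ≥0∞) (hbdd : bddRows μ) (hconn : connectedW μ)
    (x₀ x : X) (lam : ℝ) (hlam : 0 < lam)
    (hsup : convR μ x₀ x < ENNReal.ofReal lam) :
    Tendsto (expParticles μ lam x₀ x) atTop (nhds (⊤ : ℝ≥0∞)) := by
  classical
  obtain ⟨K, hKne, hK⟩ := hbdd
  have hfin : ∀ n (a b : X), matPow μ n a b ≠ ⊤ := fun n a b =>
    ne_top_of_le_ne_top (ENNReal.pow_ne_top hKne) (matPow_le_pow' μ hK n a b)
  -- extract r from the limsup condition
  obtain ⟨r, hr0, hrtop, hlr, hfreq⟩ :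
      ∃ r : ℝ≥0∞, 0 < r ∧ r ≠ ⊤ ∧ 1 < lam * r.toReal ∧
        ∃ᶠ n in atTop, r ^ n ≤ matPow μ n x₀ x := by
    have h1 : (ENNReal.ofReal lam)⁻¹ < lsRoot μ x₀ x := ENNReal.inv_lt_iff_inv_lt.mp hsup
    obtain ⟨r, hr1, hr2⟩ := exists_between h1
    have hrpos : 0 < r := lt_of_le_of_lt (by positivity) hr1
    have hrne : r ≠ ⊤ := hr2.ne_top
    refine ⟨r, hrpos, hrne, ?_, ?_⟩
    · have hinv : r⁻¹ < ENNReal.ofReal lam := ENNReal.inv_lt_iff_inv_lt.mp hr1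
      have h2 : r⁻¹.toReal < lam := by
        rw [← ENNReal.ofReal_toReal (a := r⁻¹) (by simp [hrpos.ne'])] at hinv
        exact (ENNReal.ofReal_lt_ofReal_iff hlam).mp hinv
      rw [ENNReal.toReal_inv] at h2
      have hrt : 0 < r.toReal := ENNReal.toReal_pos hrpos.ne' hrne
      rw [inv_lt_iff_one_lt_mul₀ hrt] at h2
      linarith [h2]
    · have hfreq : ∃ᶠ n in atTop, r < matPow μ n x₀ x ^ (n : ℝ)⁻¹ :=
        frequently_lt_of_lt_limsup (by isBoundedDefault) hr2
      have hev : ∀ᶠ n : ℕ in atTop, 1 ≤ n := eventually_ge_atTop 1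
      refine (hfreq.and_eventually hev).mono ?_
      rintro n ⟨hn, hn1⟩
      have h2 : r ^ n ≤ (matPow μ n x₀ x ^ (n : ℝ)⁻¹) ^ n := pow_le_pow_left' hn.le n
      have hne : (n:ℝ) ≠ 0 := Nat.cast_ne_zero.mpr (Nat.one_le_iff_ne_zero.mp hn1)
      rwa [← ENNReal.rpow_natCast (matPow μ n x₀ x ^ (n:ℝ)⁻¹) n, ← ENNReal.rpow_mul,
        inv_mul_cancel₀ hne, ENNReal.rpow_one] at h2
  -- connectedness: return path from x to x₀
  obtain ⟨k, hkpos, hc⟩ := hconn x x₀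
  set c : ℝ≥0∞ := matPow μ k x x₀ with hc_def
  have hcne : c ≠ ⊤ := hfin k x x₀
  set r' : ℝ := r.toReal with hr'_def
  set c' : ℝ := c.toReal with hc'_def
  have hr'pos : 0 < r' := ENNReal.toReal_pos hr0.ne' hrtop
  have hc'pos : 0 < c' := ENNReal.toReal_pos hc.ne' hcne
  have hrofReal : r = ENNReal.ofReal r' := (ENNReal.ofReal_toReal hrtop).symm
  have hcofReal : c = ENNReal.ofReal c' := (ENNReal.ofReal_toReal hcne).symm
  -- choose N
  have hev2 : ∀ᶠ n : ℕ in atTop, 1 < (lam * r')^n * (lam^k * c') := by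
    have ht : Tendsto (fun n : ℕ => (lam * r')^n) atTop atTop :=
      tendsto_pow_atTop_atTop_of_one_lt hlr
    filter_upwards [ht.eventually_gt_atTop (1 / (lam^k * c'))] with n hn
    rw [div_lt_iff₀ (by positivity)] at hn
    linarith [hn]
  obtain ⟨N, hbN, hNbig, hN1⟩ :
      ∃ N : ℕ, r ^ N ≤ matPow μ N x₀ x ∧ 1 < (lam * r')^N * (lam^k * c') ∧ 1 ≤ N :=
    ((hfreq.and_eventually (hev2.and (eventually_ge_atTop 1))).exists).imp
      (fun N h => ⟨h.1, h.2.1, h.2.2⟩)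
  set d : ℕ := N + k with hd_def
  have hdpos : 0 < d := by omega
  -- the chain inequality
  have hchain : ∀ j : ℕ, r ^ N * (c * r ^ N) ^ j ≤ matPow μ (N + j * d) x₀ x := by
    intro j
    induction j with
    | zero => simpa using hbN
    | succ j ih =>
      have hidx : N + (j+1) * d = (N + j * d) + k + N := by rw [hd_def]; ring
      rw [hidx]
      calc r ^ N * (c * r ^ N) ^ (j+1)
          = (r ^ N * (c * r ^ N) ^ j * c) * (r ^ N) := by ring
        _ ≤ (matPow μ (N + j * d) x₀ x * matPow μ k x x₀) * matPow μ N x₀ x := by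
            gcongr
        _ ≤ matPow μ ((N + j * d) + k) x₀ x₀ * matPow μ N x₀ x := by
            gcongr
            exact le_matPow_add' μ _ _ _ _ _
        _ ≤ matPow μ ((N + j * d) + k + N) x₀ x := le_matPow_add' μ _ _ _ _ _
  -- real constants
  set A : ℝ := lam^d * c' * r'^N with hA_def
  have hApos : 0 < A := by positivity
  have hA1 : 1 < A := by
    have : (lam * r')^N * (lam^k * c') = A := by
      rw [hA_def, hd_def, pow_add, mul_pow]; ring
    linarith [hNbig, this.symm.le]
  set α : ℝ := A ^ ((d:ℝ)⁻¹) with hα_def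
  have hα0 : 0 < α := Real.rpow_pos_of_pos hApos _
  have hα1 : 1 < α := by
    rw [hα_def]
    exact (Real.one_lt_rpow_iff_of_pos hApos).mpr (Or.inl ⟨hA1, by positivity⟩)
  have hαd : α ^ d = A := by
    rw [hα_def, ← Real.rpow_natCast (A ^ ((d:ℝ)⁻¹)) d, ← Real.rpow_mul hApos.le,
      inv_mul_cancel₀ (Nat.cast_ne_zero.mpr hdpos.ne'), Real.rpow_one]
  -- the key real identity
  have hkey : ∀ (t : ℝ) (j : ℕ),
      α^k * (α*t)^(N + j*d) = c' * lam^k * (r'^N * (c'*r'^N)^j * (lam*t)^(N + j*d)) := by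
    intro t j
    induction j with
    | zero =>
      have hb := hαd
      rw [hA_def, hd_def, pow_add, pow_add] at hb
      simp only [Nat.zero_mul, Nat.add_zero, pow_zero, one_mul]
      linear_combination t^N * hb
    | succ j ih =>
      have hidx : N + (j+1) * d = (N + j * d) + d := by ring
      have hkey2 : (α*t)^d = (c' * r'^N) * (lam*t)^d := by
        rw [mul_pow, hαd, hA_def, mul_pow]; ring
      rw [hidx]
      calc α^k * (α*t)^((N + j*d) + d) = (α^k * (α*t)^(N + j*d)) * (α*t)^d := by
            rw [pow_add]; ring
        _ = (c' * lam^k * (r'^N * (c'*r'^N)^j * (lam*t)^(N + j*d))) * ((c' * r'^N) * (lam*t)^d) := by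
            rw [ih, hkey2]
        _ = c' * lam^k * (r'^N * (c'*r'^N)^(j+1) * (lam*t)^((N + j*d) + d)) := by
            rw [pow_add, pow_succ]; ring
  -- constant K₂
  set K₂ : ℝ := α^k / (c' * lam^k) with hK₂_def
  have hK₂pos : 0 < K₂ := by positivity
  -- the lower bound function
  set Qp : ℝ → ℝ := fun u => ∑ i ∈ Finset.range N, u^i / i.factorial with hQp_def
  set g : ℝ → ℝ := fun t => Real.exp (-t) * K₂ * ((d * (α*t)^d)⁻¹ * (Real.exp (α*t) - Qp (α*t)))
    with hg_def
  -- g tends to infinity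
  have hg_tendsto : Tendsto g atTop atTop := by
    have hbase := hlimit' α hα1 d N hdpos
    have := hbase.const_mul_atTop hK₂pos
    apply this.congr'
    filter_upwards [eventually_gt_atTop 0] with t ht
    rw [hg_def, hQp_def]
    simp only
    have hE : Real.exp ((α-1)*t) = Real.exp (-t) * Real.exp (α*t) := by
      rw [← Real.exp_add]; ring_nf
    rw [hE, mul_pow]
    ring
  -- the main eventual bound : expParticles ≥ ofReal ∘ g
  have hbound : ∀ᶠ t : ℝ in atTop, ENNReal.ofReal (g t) ≤ expParticles μ lam x₀ x t := by
    filter_upwards [eventually_ge_atTop 1] with t ht1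
    set s : ℝ := α * t with hs_def
    have ht0 : 0 < t := lt_of_lt_of_le one_pos ht1
    have hs1 : 1 ≤ s := by
      rw [hs_def]; nlinarith [hα1, ht1]
    have hs0 : 0 ≤ s := le_trans zero_le_one hs1
    set y : ℝ≥0∞ := ENNReal.ofReal s with hy_def
    have hy1 : 1 ≤ y := by
      rw [hy_def]; exact ENNReal.one_le_ofReal.mpr hs1
    set L : ℝ≥0∞ := ENNReal.ofReal (lam * t) with hL_def
    -- per-term bound
    have hterm : ∀ j : ℕ,
        ENNReal.ofReal K₂ * (y ^ (N + j*d) / (((N + j*d).factorial : ℝ≥0∞)))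
          ≤ matPow μ (N + j*d) x₀ x * L ^ (N + j*d) / ((N + j*d).factorial : ℝ≥0∞) := by
      intro j
      rw [← mul_div_assoc]
      apply ENNReal.div_le_div _ le_rfl
      have hreal : K₂ * s ^ (N + j*d) = r'^N * (c' * r'^N)^j * (lam*t)^(N + j*d) := by
        rw [hK₂_def, hs_def, div_mul_eq_mul_div, div_eq_iff (by positivity : c' * lam^k ≠ 0)]
        linear_combination hkey t j
      have hQ : ENNReal.ofReal K₂ * y ^ (N + j*d)
          = r ^ N * (c * r ^ N) ^ j * L ^ (N + j*d) := by
        rw [hy_def, hL_def, hrofReal, hcofReal]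
        calc ENNReal.ofReal K₂ * (ENNReal.ofReal s) ^ (N + j*d)
            = ENNReal.ofReal (K₂ * s ^ (N + j*d)) := by
              rw [← ENNReal.ofReal_pow hs0, ← ENNReal.ofReal_mul hK₂pos.le]
          _ = ENNReal.ofReal (r'^N * (c' * r'^N)^j * (lam*t)^(N + j*d)) := by rw [hreal]
          _ = (ENNReal.ofReal r') ^ N * (ENNReal.ofReal c' * (ENNReal.ofReal r') ^ N) ^ j *
                (ENNReal.ofReal (lam*t)) ^ (N + j*d) := by
              rw [ENNReal.ofReal_mul (by positivity), ENNReal.ofReal_mul (by positivity),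
                ENNReal.ofReal_pow hr'pos.le, ENNReal.ofReal_pow (by positivity),
                ENNReal.ofReal_mul hc'pos.le, ENNReal.ofReal_pow hr'pos.le,
                ENNReal.ofReal_pow (by positivity : (0:ℝ) ≤ lam * t)]
      rw [hQ]
      gcongr
      exact hchain j
    -- assemble
    have hS1 : ENNReal.ofReal K₂ * ∑' j : ℕ, y ^ (N + j*d) / ((N + j*d).factorial : ℝ≥0∞)
        ≤ ∑' n : ℕ, matPow μ n x₀ x * L ^ n / (n.factorial : ℝ≥0∞) := by
      rw [← ENNReal.tsum_mul_left]
      calc ∑' j : ℕ, ENNReal.ofReal K₂ * (y ^ (N + j*d) / ((N + j*d).factorial : ℝ≥0∞))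
          ≤ ∑' j : ℕ, matPow μ (N + j*d) x₀ x * L ^ (N + j*d) / ((N + j*d).factorial : ℝ≥0∞) :=
            ENNReal.tsum_le_tsum hterm
        _ ≤ ∑' n : ℕ, matPow μ n x₀ x * L ^ n / (n.factorial : ℝ≥0∞) :=
            ENNReal.tsum_comp_le_tsum_of_injective
              (fun a b hab => Nat.eq_of_mul_eq_mul_right hdpos (Nat.add_left_cancel hab))
              (fun n => matPow μ n x₀ x * L ^ n / (n.factorial : ℝ≥0∞))
    -- lower bound for the AP sum
    have hAP : ((d : ℝ≥0∞) * y^d)⁻¹ * ENNReal.ofReal (Real.exp s - Qp s)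
        ≤ ∑' j : ℕ, y ^ (N + j*d) / ((N + j*d).factorial : ℝ≥0∞) := by
      have hsplit := tsum_split' (fun n => y ^ n / (n.factorial : ℝ≥0∞)) N
      have hexp : ∑' n : ℕ, y ^ n / (n.factorial : ℝ≥0∞) = ENNReal.ofReal (Real.exp s) := by
        rw [hy_def]; exact exp_tsum_ennreal' hs0
      have hQps : ∑ i ∈ Finset.range N, y ^ i / (i.factorial : ℝ≥0∞)
          = ENNReal.ofReal (Qp s) := by
        rw [hQp_def, ENNReal.ofReal_sum_of_nonneg (fun i _ => by positivity)]
        apply Finset.sum_congr rfl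
        intro i _
        rw [hy_def, ENNReal.ofReal_div_of_pos (by positivity), ← ENNReal.ofReal_pow hs0,
          ENNReal.ofReal_natCast]
      have hshift : ENNReal.ofReal (Real.exp s - Qp s)
          ≤ ∑' m : ℕ, y ^ (m + N) / ((m + N).factorial : ℝ≥0∞) := by
        have h5 : ENNReal.ofReal (Real.exp s - Qp s)
            ≤ ENNReal.ofReal (Real.exp s) - ENNReal.ofReal (Qp s) :=
          le_of_eq (ENNReal.ofReal_sub _ (by rw [hQp_def]; exact Finset.sum_nonneg (fun i _ => div_nonneg (pow_nonneg hs0 _) (Nat.cast_nonneg _))))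
        apply le_trans h5
        rw [tsub_le_iff_left, ← hQps, ← hexp, hsplit]
      have hap := ap_compare' y hy1 N d hdpos
      have hcomb := le_trans hshift hap
      rw [ENNReal.inv_mul_le_iff (mul_ne_zero (Nat.cast_ne_zero.mpr hdpos.ne')
        (pow_ne_zero _ (zero_lt_one.trans_le hy1).ne')) (by
        apply ENNReal.mul_ne_top (ENNReal.natCast_ne_top d)
        exact ENNReal.pow_ne_top ENNReal.ofReal_ne_top)]
      exact hcomb
    -- convert the ENNReal product into ofReal of the real product
    have hinv : ((d : ℝ≥0∞) * y^d)⁻¹ = ENNReal.ofReal (((d : ℝ) * s^d)⁻¹) := by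
      rw [ENNReal.ofReal_inv_of_pos (by positivity), ENNReal.ofReal_mul (by positivity),
        ENNReal.ofReal_pow hs0, ENNReal.ofReal_natCast, hy_def]
    have hg_eq : ENNReal.ofReal (g t)
        = ENNReal.ofReal (Real.exp (-t)) * (ENNReal.ofReal K₂ *
            (((d : ℝ≥0∞) * y^d)⁻¹ * ENNReal.ofReal (Real.exp s - Qp s))) := by
      rw [hinv, ← ENNReal.ofReal_mul (by positivity), ← ENNReal.ofReal_mul hK₂pos.le,
        ← ENNReal.ofReal_mul (Real.exp_nonneg _)]
      congr 1
      rw [hg_def]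
      simp only
      rw [hs_def]
      ring
    rw [expParticles, ← hL_def]
    calc ENNReal.ofReal (g t)
        = ENNReal.ofReal (Real.exp (-t)) * (ENNReal.ofReal K₂ *
            (((d : ℝ≥0∞) * y^d)⁻¹ * ENNReal.ofReal (Real.exp s - Qp s))) := hg_eq
      _ ≤ ENNReal.ofReal (Real.exp (-t)) * (ENNReal.ofReal K₂ *
            ∑' j : ℕ, y ^ (N + j*d) / ((N + j*d).factorial : ℝ≥0∞)) := by
          exact mul_le_mul_right (mul_le_mul_right hAP _) _
      _ ≤ ENNReal.ofReal (Real.exp (-t)) *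
            ∑' n : ℕ, matPow μ n x₀ x * L ^ n / (n.factorial : ℝ≥0∞) :=
          mul_le_mul_right hS1 _
  exact tendsto_nhds_top_mono (ENNReal.tendsto_ofReal_atTop.comp hg_tendsto) hbound
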